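/- Let λ and μ be partitions of the same natural number n. Then λ dominates μ (i.e. λ_1 + ⋯ + λ_a ≥ μ_1 + ⋯ + μ_a for all a ≥ 1) if and only if for every m ∈ ℕ one has Σ_{k∈ℤ} min(p_λ(k), κ_m(k)) ≥ Σ_{k∈ℤ} min(p_μ(k), κ_m(k)), where κ_m : ℤ → ℕ is defined by κ_m(i) = m if i ≥ 0, κ_m(i) = m + i if −m < i < 0, and κ_m(i) = 0 if i ≤ −m. -/

import Mathlib

noncomputable section
open Function

/-- An integral pyramid: finitely supported, maximal at 0, nondecreasing on ℤ≤0,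
nonincreasing on ℤ≥0, with jumps of size at most 1. -/
def IsIntPyramid (p : ℤ → ℕ) : Prop :=
  {n : ℤ | p n ≠ 0}.Finite ∧
  (∀ n, p n ≤ p 0) ∧
  (∀ ⦃m n : ℤ⦄, m ≤ n → n ≤ 0 → p m ≤ p n) ∧
  (∀ ⦃m n : ℤ⦄, 0 ≤ m → m ≤ n → p n ≤ p m) ∧
  (∀ n : ℤ, |(p n : ℤ) - (p (n + 1) : ℤ)| ≤ 1)

/-- A partition, encoded as a nonincreasing finitely supported function `l : ℕ → ℕ`,
where `l a` is the part `λ_{a+1}`. -/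
def IsPartition (l : ℕ → ℕ) : Prop :=
  (∀ ⦃m n : ℕ⦄, m ≤ n → l n ≤ l m) ∧ {a : ℕ | l a ≠ 0}.Finite

/-- The Young diagram of the partition `l`, in 1-based coordinates:
`(x, y)` with `1 ≤ y`, `1 ≤ x ≤ λ_y = l (y - 1)`. -/
def young (l : ℕ → ℕ) : Set (ℤ × ℤ) :=
  {s | 1 ≤ s.1 ∧ 1 ≤ s.2 ∧ s.1 ≤ (l ((s.2 - 1).toNat) : ℤ)}

/-- The pyramid associated with a partition: `pyrOf l k` is the number of boxes
`s = (x, y)` of the Young diagram with content `c s = x - y = k`. -/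
def pyrOf (l : ℕ → ℕ) : ℤ → ℕ := fun k => {s ∈ young l | s.1 - s.2 = k}.ncard

/-- The cut-off function `κ_m : ℤ → ℕ`. -/
def kappa (m : ℕ) (i : ℤ) : ℕ :=
  if 0 ≤ i then m else if -(m : ℤ) < i then ((m : ℤ) + i).toNat else 0

/-! ### Auxiliary material -/

/-- The `y`-coordinates of the boxes on diagonal `k` of the Young diagram of `l`. -/
def Aset (l : ℕ → ℕ) (k : ℤ) : Set ℤ :=
  {y : ℤ | 1 ≤ y ∧ 1 ≤ y + k ∧ y + k ≤ (l ((y-1).toNat) : ℤ)}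

lemma phi_injOn' (k : ℤ) (S : Set ℤ) : Set.InjOn (fun y : ℤ => (y + k, y)) S := by
  intro a _ b _ h
  simpa using (Prod.ext_iff.mp h).2

lemma slice_eq_image (l : ℕ → ℕ) (k : ℤ) :
    {s ∈ young l | s.1 - s.2 = k} = (fun y : ℤ => (y + k, y)) '' Aset l k := by
  ext ⟨x, y⟩
  simp only [young, Aset, Set.mem_setOf_eq, Set.mem_image, Prod.mk.injEq]
  constructor
  · rintro ⟨⟨hx, hy, hxl⟩, hk⟩
    exact ⟨y, ⟨hy, by omega, by rw [show y + k = x by omega]; exact hxl⟩, by omega, rfl⟩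
  · rintro ⟨a, ⟨h1, h2, h3⟩, rfl, rfl⟩
    exact ⟨⟨h2, h1, h3⟩, by ring⟩

lemma pyrOf_eq_ncard_Aset (l : ℕ → ℕ) (k : ℤ) :
    pyrOf l k = (Aset l k).ncard := by
  rw [pyrOf, slice_eq_image, Set.ncard_image_of_injOn (phi_injOn' k _)]

lemma Aset_finite (l : ℕ → ℕ) (hl : IsPartition l) (k : ℤ) : (Aset l k).Finite := by
  classical
  set N : ℕ := hl.2.toFinset.sup id + 1 with hN
  have hzero : ∀ i : ℕ, N ≤ i → l i = 0 := by
    intro i hi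
    by_contra h
    have : i ∈ hl.2.toFinset := by simpa using h
    have := Finset.le_sup (f := id) this
    simp only [id] at this
    omega
  apply Set.Finite.subset (Set.finite_Icc 1 (N : ℤ))
  rintro y ⟨h1, h2, h3⟩
  refine ⟨h1, ?_⟩
  by_contra h
  push_neg at h
  have : l ((y - 1).toNat) = 0 := hzero _ (by omega)
  omega

lemma Aset_dc (l : ℕ → ℕ) (hl : IsPartition l) (k : ℤ) :
    ∀ y ∈ Aset l k, ∀ y', max 1 (1 - k) ≤ y' → y' ≤ y → y' ∈ Aset l k := by
  rintro y ⟨h1, h2, h3⟩ y' hy1 hy2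
  have hmono : (l ((y - 1).toNat) : ℤ) ≤ (l ((y' - 1).toNat) : ℤ) := by
    exact_mod_cast hl.1 (by omega)
  exact ⟨by omega, by omega, by omega⟩

lemma kappa_eq (m : ℕ) (k : ℤ) : kappa m k = ((m : ℤ) - max 1 (1 - k) + 1).toNat := by
  rw [kappa]; split_ifs <;> omega

lemma ncard_inter_Iic {S : Set ℤ} (hfin : S.Finite) (y0 m : ℤ)
    (hy0 : S ⊆ Set.Ici y0)
    (hdc : ∀ y ∈ S, ∀ y', y0 ≤ y' → y' ≤ y → y' ∈ S) :
    (S ∩ Set.Iic m).ncard = min S.ncard (m - y0 + 1).toNat := by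
  rcases S.eq_empty_or_nonempty with rfl | hne
  · simp
  · obtain ⟨M, hMS, hM⟩ := Set.Finite.exists_maximalFor id S hfin hne
    have hle : ∀ y ∈ S, y ≤ M := by
      intro y hy
      by_contra h
      push_neg at h
      have := hM hy h.le
      simp only [id] at this
      omega
    have hS : S = Set.Icc y0 M := by
      ext y
      constructor
      · intro hy; exact ⟨hy0 hy, hle y hy⟩
      · rintro ⟨h1, h2⟩; exact hdc M hMS y h1 h2
    have hS2 : S ∩ Set.Iic m = Set.Icc y0 (min M m) := by
      rw [hS]; ext y
      simp only [Set.mem_inter_iff, Set.mem_Icc, Set.mem_Iic, le_min_iff]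
      omega
    rw [hS2, hS, ← Finset.coe_Icc, ← Finset.coe_Icc, Set.ncard_coe_finset,
      Set.ncard_coe_finset, Int.card_Icc, Int.card_Icc]
    have hy0M : y0 ≤ M := by
      have := hy0 hMS; simpa using this
    omega

lemma min_pyr_kappa (l : ℕ → ℕ) (hl : IsPartition l) (m : ℕ) (k : ℤ) :
    min (pyrOf l k) (kappa m k) = (Aset l k ∩ Set.Iic (m:ℤ)).ncard := by
  rw [pyrOf_eq_ncard_Aset, kappa_eq,
    ncard_inter_Iic (Aset_finite l hl k) (max 1 (1 - k)) (m:ℤ)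
      (fun y hy => by
        have h1 := hy.1; have h2 := hy.2.1
        simp only [Set.mem_Ici]; omega)
      (Aset_dc l hl k)]

/-- The boxes in the first `m` rows of the Young diagram of `l`, as a Finset. -/
def Tfin (l : ℕ → ℕ) (m : ℕ) : Finset (ℤ × ℤ) :=
  (Finset.range m).biUnion fun i =>
    (Finset.Icc (1:ℤ) (l i)).map
      ⟨fun x => (x, (i:ℤ)+1), fun a b h => by simpa using h⟩

lemma mem_Tfin (l : ℕ → ℕ) (m : ℕ) (x y : ℤ) :
    (x, y) ∈ Tfin l m ↔ 1 ≤ y ∧ y ≤ (m:ℤ) ∧ 1 ≤ x ∧ x ≤ (l ((y-1).toNat) : ℤ) := by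
  simp only [Tfin, Finset.mem_biUnion, Finset.mem_range, Finset.mem_map,
    Finset.mem_Icc, Embedding.coeFn_mk, Prod.mk.injEq]
  constructor
  · rintro ⟨i, hi, x', ⟨hx1, hx2⟩, rfl, rfl⟩
    refine ⟨by omega, by omega, hx1, ?_⟩
    rw [show ((i:ℤ) + 1 - 1).toNat = i by omega]
    exact hx2
  · rintro ⟨h1, h2, h3, h4⟩
    refine ⟨(y-1).toNat, by omega, x, ⟨h3, h4⟩, Prod.ext rfl (by show ((y-1).toNat : ℤ) + 1 = y; omega)⟩

lemma Tfin_card (l : ℕ → ℕ) (m : ℕ) :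
    (Tfin l m).card = ∑ i ∈ Finset.range m, l i := by
  rw [Tfin, Finset.card_biUnion]
  · refine Finset.sum_congr rfl fun i _ => ?_
    rw [Finset.card_map, Int.card_Icc]
    omega
  · intro a _ b _ hab
    simp only [Finset.disjoint_left, Finset.mem_map, Finset.mem_Icc,
      Embedding.coeFn_mk]
    rintro ⟨x, y⟩ ⟨x1, _, h1⟩ ⟨x2, _, h2⟩
    apply hab
    have e1 : (a:ℤ) + 1 = y := (Prod.ext_iff.mp h1).2
    have e2 : (b:ℤ) + 1 = y := (Prod.ext_iff.mp h2).2
    omega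

lemma fiber_eq (l : ℕ → ℕ) (m : ℕ) (k : ℤ) :
    ↑((Tfin l m).filter fun s => s.1 - s.2 = k) =
      (fun y : ℤ => (y + k, y)) '' (Aset l k ∩ Set.Iic (m:ℤ)) := by
  ext ⟨x, y⟩
  simp only [Finset.coe_filter, Set.mem_setOf_eq, mem_Tfin, Set.mem_image,
    Set.mem_inter_iff, Set.mem_Iic, Aset, Set.mem_setOf_eq, Prod.mk.injEq]
  constructor
  · rintro ⟨⟨h1, h2, h3, h4⟩, hk⟩
    exact ⟨y, ⟨⟨h1, by omega, by rw [show y + k = x by omega]; exact h4⟩, h2⟩, by omega, rfl⟩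
  · rintro ⟨a, ⟨⟨h1, h2, h3⟩, h5⟩, rfl, rfl⟩
    exact ⟨⟨h1, h5, h2, h3⟩, by ring⟩

lemma fiber_card (l : ℕ → ℕ) (m : ℕ) (k : ℤ) :
    ((Tfin l m).filter fun s => s.1 - s.2 = k).card =
      (Aset l k ∩ Set.Iic (m:ℤ)).ncard := by
  rw [← Set.ncard_coe_finset, fiber_eq, Set.ncard_image_of_injOn (phi_injOn' k _)]

lemma sum_fibers (l : ℕ → ℕ) (m : ℕ) :
    ∑ᶠ k : ℤ, (Aset l k ∩ Set.Iic (m:ℤ)).ncard = ∑ i ∈ Finset.range m, l i := by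
  have hsupp : (Function.support fun k : ℤ => (Aset l k ∩ Set.Iic (m:ℤ)).ncard)
      ⊆ ↑((Tfin l m).image fun s => s.1 - s.2) := by
    intro k hk
    simp only [Function.mem_support] at hk
    have hne : (Aset l k ∩ Set.Iic (m:ℤ)).Nonempty := by
      rw [Set.nonempty_iff_ne_empty]
      intro h
      rw [h] at hk
      simp at hk
    obtain ⟨y, ⟨h1, h2, h3⟩, h4⟩ := hne
    simp only [Finset.coe_image, Set.mem_image, Finset.mem_coe]
    exact ⟨(y + k, y), (mem_Tfin l m _ _).mpr ⟨h1, h4, h2, h3⟩, by ring⟩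
  rw [finsum_eq_finset_sum_of_support_subset _ hsupp]
  rw [← Tfin_card l m]
  rw [Finset.card_eq_sum_card_fiberwise (f := fun s : ℤ × ℤ => s.1 - s.2)
    (t := (Tfin l m).image fun s => s.1 - s.2) (fun x hx => Finset.mem_image_of_mem _ hx)]
  exact Finset.sum_congr rfl fun k _ => (fiber_card l m k).symm

/-- Key identity: `∑_k min(p_λ k, κ_m k)` is the number of boxes in the first `m`
rows of the Young diagram, i.e. `λ_1 + ⋯ + λ_m`. -/
lemma key (l : ℕ → ℕ) (hl : IsPartition l) (m : ℕ) :
    ∑ᶠ k : ℤ, min (pyrOf l k) (kappa m k) = ∑ i ∈ Finset.range m, l i := by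
  rw [← sum_fibers l m]
  exact finsum_congr fun k => min_pyr_kappa l hl m k

/-- for partitions `λ, μ` of the same `n`, `λ` dominates `μ` iff
`∑_k min(p_λ k, κ_m k) ≥ ∑_k min(p_μ k, κ_m k)` for every `m ∈ ℕ`. -/
theorem dominance_iff_pyramid (n : ℕ) (l μ : ℕ → ℕ)
    (hl : IsPartition l) (hμ : IsPartition μ)
    (hln : ∑ᶠ a : ℕ, l a = n) (hμn : ∑ᶠ a : ℕ, μ a = n) :
    (∀ a : ℕ, 1 ≤ a → ∑ i ∈ Finset.range a, μ i ≤ ∑ i ∈ Finset.range a, l i) ↔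
      (∀ m : ℕ, ∑ᶠ k : ℤ, min (pyrOf μ k) (kappa m k) ≤ ∑ᶠ k : ℤ, min (pyrOf l k) (kappa m k)) := by
  constructor
  · intro h m
    rw [key l hl m, key μ hμ m]
    rcases Nat.eq_zero_or_pos m with rfl | hm
    · simp
    · exact h m hm
  · intro h a ha
    have := h a
    rwa [key l hl a, key μ hμ a] at this
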